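/- Under the Markov chain (S̃, X̃₁, X̃₂) → (U,A,B) → (X₁,X₂) → Y with additionally X₁ ⟂ X₂ | (U,A,B) and U ⟂ (A,B), the following entropy identity holds: H(X̃₂ | Ũ B̃) + H(B | S̃ X̃₂) − H(X̃₂ B | S̃ X̃₁ U A Y) = I(X̃₂; Ỹ | Ũ Ã B̃ X̃₁) + I(B; Y | S̃ X̃₁ U A), where S̃ = (Ũ, Ã, B̃, Ỹ) and the joint law of (S̃, X̃₁, X̃₂) equals that of ((U,A,B,Y), X₁, X₂). -/

import Mathlib

open scoped BigOperators

namespace MACFB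

variable {Ω : Type*} [Fintype Ω]

/-- `p` is a probability mass function on the finite set `Ω`. -/
def IsPMF (p : Ω → ℝ) : Prop := (∀ ω, 0 ≤ p ω) ∧ ∑ ω, p ω = 1

/-- Probability that the random variable `X` takes the value `a`. -/
noncomputable def pr {α : Type*} [DecidableEq α] (p : Ω → ℝ) (X : Ω → α) (a : α) : ℝ :=
  ∑ ω, if X ω = a then p ω else 0

/-- Shannon entropy of the random variable `X` under `p`. -/
noncomputable def ent {α : Type*} [Fintype α] [DecidableEq α] (p : Ω → ℝ) (X : Ω → α) : ℝ :=
  ∑ a, Real.negMulLog (pr p X a)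

/-- Conditional entropy `H(X | Z)`. -/
noncomputable def condEnt {α γ : Type*} [Fintype α] [DecidableEq α] [Fintype γ] [DecidableEq γ]
    (p : Ω → ℝ) (X : Ω → α) (Z : Ω → γ) : ℝ :=
  ent p (fun ω => (X ω, Z ω)) - ent p Z

/-- Conditional mutual information `I(X ; Y | Z)`. -/
noncomputable def condMI {α β γ : Type*} [Fintype α] [DecidableEq α] [Fintype β] [DecidableEq β]
    [Fintype γ] [DecidableEq γ] (p : Ω → ℝ) (X : Ω → α) (Y : Ω → β) (Z : Ω → γ) : ℝ :=
  ent p (fun ω => (X ω, Z ω)) + ent p (fun ω => (Y ω, Z ω))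
    - ent p (fun ω => (X ω, Y ω, Z ω)) - ent p Z

/-- `X` and `Y` are conditionally independent given `Z` (under `p`). -/
def CondIndep {α β γ : Type*} [DecidableEq α] [DecidableEq β] [DecidableEq γ]
    (p : Ω → ℝ) (X : Ω → α) (Y : Ω → β) (Z : Ω → γ) : Prop :=
  ∀ (x : α) (y : β) (z : γ),
    pr p Z z * pr p (fun ω => (X ω, Y ω, Z ω)) (x, y, z) =
      pr p (fun ω => (X ω, Z ω)) (x, z) * pr p (fun ω => (Y ω, Z ω)) (y, z)

end MACFB

open MACFB

section Helpers
variable {Ω : Type*} [Fintype Ω]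

lemma inj_of_linv {A B : Type*} (f : A → B) (g : B → A) (h : ∀ a, g (f a) = a) :
    Function.Injective f :=
  Function.LeftInverse.injective h

lemma pr_nonneg {α : Type*} [DecidableEq α] {p : Ω → ℝ} (hp : ∀ ω, 0 ≤ p ω)
    (X : Ω → α) (a : α) : 0 ≤ pr p X a :=
  Finset.sum_nonneg fun ω _ => by by_cases h : X ω = a <;> simp [h, hp ω]

lemma pr_comp {α β : Type*} [Fintype α] [DecidableEq α] [DecidableEq β]
    (p : Ω → ℝ) (X : Ω → α) (f : α → β) (c : β) :
    pr p (fun ω => f (X ω)) c = ∑ a, if f a = c then pr p X a else 0 := by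
  unfold pr
  have h1 : ∀ a : α, (if f a = c then ∑ ω, if X ω = a then p ω else 0 else 0)
      = ∑ ω, if X ω = a then (if f a = c then p ω else 0) else 0 := by
    intro a; split_ifs with h <;> simp
  rw [Finset.sum_congr rfl fun a _ => h1 a, Finset.sum_comm]
  refine Finset.sum_congr rfl fun ω _ => ?_
  simp

lemma pr_comp_inj {α β : Type*} [Fintype α] [DecidableEq α] [DecidableEq β]
    (p : Ω → ℝ) (X : Ω → α) {f : α → β} (hf : Function.Injective f) (a : α) :
    pr p (fun ω => f (X ω)) (f a) = pr p X a := by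
  unfold pr
  refine Finset.sum_congr rfl fun ω _ => by simp [hf.eq_iff]

lemma pr_comp_notin {α β : Type*} [Fintype α] [DecidableEq α] [DecidableEq β]
    (p : Ω → ℝ) (X : Ω → α) (f : α → β) {b : β} (hb : ∀ a, f a ≠ b) :
    pr p (fun ω => f (X ω)) b = 0 := by
  unfold pr
  refine Finset.sum_eq_zero fun ω _ => by simp [hb (X ω)]

/-- entropy only depends on the composed distribution. -/
lemma ent_comp_congr {α β : Type*} [Fintype α] [DecidableEq α] [Fintype β] [DecidableEq β]
    (p : Ω → ℝ) (X Y : Ω → α) (h : ∀ a, pr p X a = pr p Y a) (f : α → β) :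
    ent p (fun ω => f (X ω)) = ent p (fun ω => f (Y ω)) := by
  unfold ent
  refine Finset.sum_congr rfl fun c _ => ?_
  rw [pr_comp, pr_comp]
  simp only [h]

lemma ent_comp_inj {α β : Type*} [Fintype α] [DecidableEq α] [Fintype β] [DecidableEq β]
    (p : Ω → ℝ) (X : Ω → α) {f : α → β} (hf : Function.Injective f) :
    ent p (fun ω => f (X ω)) = ent p X := by
  unfold ent
  have h1 : ∑ b ∈ Finset.univ.image f, Real.negMulLog (pr p (fun ω => f (X ω)) b)
      = ∑ a, Real.negMulLog (pr p X a) := by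
    rw [Finset.sum_image (fun x _ y _ h => hf h)]
    exact Finset.sum_congr rfl fun a _ => by rw [pr_comp_inj p X hf]
  rw [← h1]
  symm
  apply Finset.sum_subset (Finset.subset_univ _)
  intro b _ hb
  rw [pr_comp_notin p X f, Real.negMulLog_zero]
  intro a hab
  exact hb (Finset.mem_image.2 ⟨a, Finset.mem_univ a, hab⟩)

end Helpers

section CIEnt
variable {Ω : Type*} [Fintype Ω]
variable {α β γ : Type*} [Fintype α] [DecidableEq α] [Fintype β] [DecidableEq β]
  [Fintype γ] [DecidableEq γ]

lemma pr_marg_z (p : Ω → ℝ) (X : Ω → α) (Y : Ω → β) (Z : Ω → γ) (z : γ) :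
    pr p Z z = ∑ x, ∑ y, pr p (fun ω => (X ω, Y ω, Z ω)) (x, y, z) := by
  unfold pr
  have h1 : ∀ ω, (if Z ω = z then p ω else 0)
      = ∑ x, ∑ y, (if (X ω, Y ω, Z ω) = (x, y, z) then p ω else 0) := by
    intro ω; simp [Prod.mk.injEq, ite_and]
  rw [Finset.sum_congr rfl fun ω _ => h1 ω, Finset.sum_comm]
  exact Finset.sum_congr rfl fun x _ => Finset.sum_comm

lemma pr_marg_xz (p : Ω → ℝ) (X : Ω → α) (Y : Ω → β) (Z : Ω → γ) (x : α) (z : γ) :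
    pr p (fun ω => (X ω, Z ω)) (x, z)
      = ∑ y, pr p (fun ω => (X ω, Y ω, Z ω)) (x, y, z) := by
  unfold pr
  have h1 : ∀ ω, (if (X ω, Z ω) = (x, z) then p ω else 0)
      = ∑ y, (if (X ω, Y ω, Z ω) = (x, y, z) then p ω else 0) := by
    intro ω; simp [Prod.mk.injEq, ite_and]
  rw [Finset.sum_congr rfl fun ω _ => h1 ω, Finset.sum_comm]

lemma pr_marg_yz (p : Ω → ℝ) (X : Ω → α) (Y : Ω → β) (Z : Ω → γ) (y : β) (z : γ) :
    pr p (fun ω => (Y ω, Z ω)) (y, z)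
      = ∑ x, pr p (fun ω => (X ω, Y ω, Z ω)) (x, y, z) := by
  unfold pr
  have h1 : ∀ ω, (if (Y ω, Z ω) = (y, z) then p ω else 0)
      = ∑ x, (if (X ω, Y ω, Z ω) = (x, y, z) then p ω else 0) := by
    intro ω; simp [Prod.mk.injEq, ite_and]
  rw [Finset.sum_congr rfl fun ω _ => h1 ω, Finset.sum_comm]

lemma sum3_comm {A B C : Type*} [Fintype A] [Fintype B] [Fintype C] (f : A → B → C → ℝ) :
    (∑ x, ∑ y, ∑ z, f x y z) = ∑ z, ∑ x, ∑ y, f x y z := by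
  calc (∑ x, ∑ y, ∑ z, f x y z) = ∑ x, ∑ z, ∑ y, f x y z :=
        Finset.sum_congr rfl fun x _ => Finset.sum_comm
    _ = ∑ z, ∑ x, ∑ y, f x y z := Finset.sum_comm

lemma condIndep_ent (p : Ω → ℝ) (hp : ∀ ω, 0 ≤ p ω) (X : Ω → α) (Y : Ω → β) (Z : Ω → γ)
    (h : CondIndep p X Y Z) :
    ent p (fun ω => (X ω, Y ω, Z ω)) + ent p Z
      = ent p (fun ω => (X ω, Z ω)) + ent p (fun ω => (Y ω, Z ω)) := by
  classical
  set q : α → β → γ → ℝ := fun x y z => pr p (fun ω => (X ω, Y ω, Z ω)) (x, y, z) with hqdef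
  have hq0 : ∀ x y z, 0 ≤ q x y z := fun x y z => pr_nonneg hp _ _
  set Pz : γ → ℝ := fun z => ∑ x, ∑ y, q x y z with hPzdef
  set Pxz : α → γ → ℝ := fun x z => ∑ y, q x y z with hPxzdef
  set Pyz : β → γ → ℝ := fun y z => ∑ x, q x y z with hPyzdef
  have hz : ∀ z, pr p Z z = Pz z := fun z => pr_marg_z p X Y Z z
  have hxz : ∀ x z, pr p (fun ω => (X ω, Z ω)) (x, z) = Pxz x z :=
    fun x z => pr_marg_xz p X Y Z x z
  have hyz : ∀ y z, pr p (fun ω => (Y ω, Z ω)) (y, z) = Pyz y z :=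
    fun y z => pr_marg_yz p X Y Z y z
  have hci : ∀ x y z, Pz z * q x y z = Pxz x z * Pyz y z := by
    intro x y z
    have := h x y z
    rwa [hz, hxz, hyz] at this
  have key : ∀ z x y,
      Real.negMulLog (q x y z) + (-(q x y z * Real.log (Pz z)))
        = (-(q x y z * Real.log (Pxz x z))) + (-(q x y z * Real.log (Pyz y z))) := by
    intro z x y
    rcases eq_or_lt_of_le (hq0 x y z) with hq | hq
    · rw [← hq]; simp
    have hPxz : q x y z ≤ Pxz x z :=
      Finset.single_le_sum (f := fun y' => q x y' z) (fun i _ => hq0 x i z) (Finset.mem_univ y)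
    have hPyz : q x y z ≤ Pyz y z :=
      Finset.single_le_sum (f := fun x' => q x' y z) (fun i _ => hq0 i y z) (Finset.mem_univ x)
    have hPz : Pxz x z ≤ Pz z :=
      Finset.single_le_sum (f := fun x' => ∑ y', q x' y' z)
        (fun i _ => Finset.sum_nonneg fun j _ => hq0 i j z) (Finset.mem_univ x)
    have hq' : 0 < q x y z := hq
    have h1 : 0 < Pxz x z := lt_of_lt_of_le hq' hPxz
    have h2 : 0 < Pyz y z := lt_of_lt_of_le hq' hPyz
    have h3 : 0 < Pz z := lt_of_lt_of_le h1 hPz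
    have hlog := congrArg Real.log (hci x y z)
    rw [Real.log_mul h3.ne' hq'.ne', Real.log_mul h1.ne' h2.ne'] at hlog
    rw [Real.negMulLog]
    linear_combination (-(q x y z)) * hlog
  have e1 : ent p (fun ω => (X ω, Y ω, Z ω)) = ∑ z, ∑ x, ∑ y, Real.negMulLog (q x y z) := by
    rw [ent]
    simp only [Fintype.sum_prod_type]
    exact sum3_comm (fun x y z => Real.negMulLog (q x y z))
  have e2 : ent p Z = ∑ z, ∑ x, ∑ y, (-(q x y z * Real.log (Pz z))) := by
    rw [ent]
    refine Finset.sum_congr rfl fun z _ => ?_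
    rw [hz z, Real.negMulLog, neg_mul]
    have hstep : Pz z * Real.log (Pz z) = ∑ x, ∑ y, q x y z * Real.log (Pz z) := by
      conv_lhs => rw [hPzdef]
      simp only [Finset.sum_mul]
      rfl
    rw [hstep]
    simp only [← Finset.sum_neg_distrib]
  have e3 : ent p (fun ω => (X ω, Z ω)) = ∑ z, ∑ x, ∑ y, (-(q x y z * Real.log (Pxz x z))) := by
    rw [ent]
    simp only [Fintype.sum_prod_type]
    rw [show (∑ x, ∑ z, Real.negMulLog (pr p (fun ω => (X ω, Z ω)) (x, z)))
        = ∑ x, ∑ z, ∑ y, (-(q x y z * Real.log (Pxz x z))) from ?_]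
    · calc (∑ x, ∑ z, ∑ y, (-(q x y z * Real.log (Pxz x z))))
          = ∑ x, ∑ y, ∑ z, (-(q x y z * Real.log (Pxz x z))) :=
            Finset.sum_congr rfl fun x _ => Finset.sum_comm
        _ = _ := sum3_comm (fun x y z => -(q x y z * Real.log (Pxz x z)))
    refine Finset.sum_congr rfl fun x _ => Finset.sum_congr rfl fun z _ => ?_
    rw [hxz x z, Real.negMulLog, neg_mul]
    have hstep : Pxz x z * Real.log (Pxz x z) = ∑ y, q x y z * Real.log (Pxz x z) := by
      conv_lhs => rw [hPxzdef]
      simp only [Finset.sum_mul]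
      rfl
    rw [hstep]
    simp only [← Finset.sum_neg_distrib]
  have e4 : ent p (fun ω => (Y ω, Z ω)) = ∑ z, ∑ x, ∑ y, (-(q x y z * Real.log (Pyz y z))) := by
    rw [ent]
    simp only [Fintype.sum_prod_type]
    rw [show (∑ y, ∑ z, Real.negMulLog (pr p (fun ω => (Y ω, Z ω)) (y, z)))
        = ∑ y, ∑ z, ∑ x, (-(q x y z * Real.log (Pyz y z))) from ?_]
    · calc (∑ y, ∑ z, ∑ x, (-(q x y z * Real.log (Pyz y z))))
          = ∑ x, ∑ y, ∑ z, (-(q x y z * Real.log (Pyz y z))) :=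
            sum3_comm (fun y z x => -(q x y z * Real.log (Pyz y z)))
        _ = _ := sum3_comm (fun x y z => -(q x y z * Real.log (Pyz y z)))
    refine Finset.sum_congr rfl fun y _ => Finset.sum_congr rfl fun z _ => ?_
    rw [hyz y z, Real.negMulLog, neg_mul]
    have hstep : Pyz y z * Real.log (Pyz y z) = ∑ x, q x y z * Real.log (Pyz y z) := by
      conv_lhs => rw [hPyzdef]
      simp only [Finset.sum_mul]
      rfl
    rw [hstep]
    simp only [← Finset.sum_neg_distrib]
  rw [e1, e2, e3, e4]
  simp only [← Finset.sum_add_distrib]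
  exact Finset.sum_congr rfl fun z _ => Finset.sum_congr rfl fun x _ =>
    Finset.sum_congr rfl fun y _ => key z x y

end CIEnt


set_option synthInstance.maxSize 512
set_option synthInstance.maxHeartbeats 400000
set_option maxHeartbeats 4000000

/-- Under the full factorization
`P_{S̃X̃₁X̃₂} · Q_{A|S̃X̃₁} · Q_{B|S̃X̃₂} · P_U · P_{X₁|UA} · P_{X₂|UB} · P_{Y|X₁X₂}`
(with `S̃ = (Ũ,Ã,B̃,Ỹ)`), together with the marginal equality between the laws
of `(S̃,X̃₁,X̃₂)` and `((U,A,B,Y),X₁,X₂)`: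
`H(X̃₂|ŨB̃) + H(B|S̃X̃₂) − H(X̃₂B|S̃X̃₁UAY) = I(X̃₂;Ỹ|ŨÃB̃X̃₁) + I(B;Y|S̃X̃₁UA)`. -/
theorem stmt11 {𝒰 𝒜 ℬ 𝒴 𝒳₁ 𝒳₂ : Type*}
    [Fintype 𝒰] [DecidableEq 𝒰] [Fintype 𝒜] [DecidableEq 𝒜]
    [Fintype ℬ] [DecidableEq ℬ] [Fintype 𝒴] [DecidableEq 𝒴]
    [Fintype 𝒳₁] [DecidableEq 𝒳₁] [Fintype 𝒳₂] [DecidableEq 𝒳₂]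
    (Pt : (𝒰 × 𝒜 × ℬ × 𝒴) × 𝒳₁ × 𝒳₂ → ℝ)
    (QA : (𝒰 × 𝒜 × ℬ × 𝒴) → 𝒳₁ → 𝒜 → ℝ)
    (QB : (𝒰 × 𝒜 × ℬ × 𝒴) → 𝒳₂ → ℬ → ℝ)
    (PU : 𝒰 → ℝ) (PX1 : 𝒰 → 𝒜 → 𝒳₁ → ℝ) (PX2 : 𝒰 → ℬ → 𝒳₂ → ℝ)
    (PY : 𝒳₁ → 𝒳₂ → 𝒴 → ℝ)
    (hPt : IsPMF Pt)
    (hQA : ∀ s x, IsPMF (QA s x)) (hQB : ∀ s x, IsPMF (QB s x))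
    (hPU : IsPMF PU) (hPX1 : ∀ u a, IsPMF (PX1 u a)) (hPX2 : ∀ u b, IsPMF (PX2 u b))
    (hPY : ∀ x1 x2, IsPMF (PY x1 x2))
    -- the joint distribution on Ω, factorized as in the coding scheme
    (p : ((𝒰 × 𝒜 × ℬ × 𝒴) × 𝒳₁ × 𝒳₂) × 𝒰 × 𝒜 × ℬ × 𝒳₁ × 𝒳₂ × 𝒴 → ℝ)
    (hp : ∀ st xt1 xt2 u a b x1 x2 y,
      p ((st, xt1, xt2), u, a, b, x1, x2, y)
        = Pt (st, xt1, xt2) * QA st xt1 a * QB st xt2 b * PU u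
            * PX1 u a x1 * PX2 u b x2 * PY x1 x2 y)
    -- the marginal of (S̃,X̃₁,X̃₂) equals the marginal of ((U,A,B,Y),X₁,X₂)
    (hmarg : ∀ (s : 𝒰 × 𝒜 × ℬ × 𝒴) (x1 : 𝒳₁) (x2 : 𝒳₂),
      pr p (fun ω => ω.1) (s, x1, x2)
        = pr p (fun ω => ((ω.2.1, ω.2.2.1, ω.2.2.2.1, ω.2.2.2.2.2.2),
            ω.2.2.2.2.1, ω.2.2.2.2.2.1)) (s, x1, x2)) :
    condEnt p (fun ω => ω.1.2.2) (fun ω => (ω.1.1.1, ω.1.1.2.2.1))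
      + condEnt p (fun ω => ω.2.2.2.1) (fun ω => (ω.1.1, ω.1.2.2))
      - condEnt p (fun ω => (ω.1.2.2, ω.2.2.2.1))
          (fun ω => (ω.1.1, ω.1.2.1, ω.2.1, ω.2.2.1, ω.2.2.2.2.2.2))
      = condMI p (fun ω => ω.1.2.2) (fun ω => ω.1.1.2.2.2)
          (fun ω => (ω.1.1.1, ω.1.1.2.1, ω.1.1.2.2.1, ω.1.2.1))
        + condMI p (fun ω => ω.2.2.2.1) (fun ω => ω.2.2.2.2.2.2)
          (fun ω => (ω.1.1, ω.1.2.1, ω.2.1, ω.2.2.1)) := by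

  classical
  -- sum-to-one facts
  have hsQA : ∀ s x, ∑ a, QA s x a = 1 := fun s x => (hQA s x).2
  have hsQB : ∀ s x, ∑ b, QB s x b = 1 := fun s x => (hQB s x).2
  have hsPU : ∑ u, PU u = 1 := hPU.2
  have hsPX1 : ∀ u a, ∑ x, PX1 u a x = 1 := fun u a => (hPX1 u a).2
  have hsPX2 : ∀ u b, ∑ x, PX2 u b x = 1 := fun u b => (hPX2 u b).2
  have hsPY : ∀ x1 x2, ∑ y, PY x1 x2 y = 1 := fun x1 x2 => (hPY x1 x2).2
  have hp0 : ∀ ω, 0 ≤ p ω := by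
    rintro ⟨⟨st, xt1, xt2⟩, u, a, b, x1, x2, y⟩
    rw [hp]
    exact mul_nonneg (mul_nonneg (mul_nonneg (mul_nonneg (mul_nonneg (mul_nonneg
      (hPt.1 _) ((hQA _ _).1 _)) ((hQB _ _).1 _)) (hPU.1 _)) ((hPX1 _ _).1 _))
      ((hPX2 _ _).1 _)) ((hPY _ _).1 _)
  -- marginal computations
  have hm1 : ∀ s t1, pr p (fun ω => (ω.1.1, ω.1.2.1)) (s, t1) = ∑ t2, Pt (s, t1, t2) := by
    intro s t1
    unfold pr
    simp only [Fintype.sum_prod_type, hp, Prod.mk.injEq, ite_and, Finset.sum_ite_irrel,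
      Finset.sum_const_zero, Finset.sum_ite_eq, Finset.sum_ite_eq', Finset.mem_univ, if_true,
      ← Finset.mul_sum, ← Finset.sum_mul, hsQA, hsQB, hsPU, hsPX1, hsPX2, hsPY, mul_one, one_mul]
  have hm2 : ∀ t2 u a s t1, pr p (fun ω => (ω.1.2.2, (ω.2.1, ω.2.2.1), (ω.1.1, ω.1.2.1)))
      (t2, (u, a), (s, t1)) = Pt (s, t1, t2) * QA s t1 a * PU u := by
    intro t2 u a s t1
    unfold pr
    simp only [Fintype.sum_prod_type, hp, Prod.mk.injEq, ite_and, Finset.sum_ite_irrel,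
      Finset.sum_const_zero, Finset.sum_ite_eq, Finset.sum_ite_eq', Finset.mem_univ, if_true,
      ← Finset.mul_sum, ← Finset.sum_mul, hsQA, hsQB, hsPU, hsPX1, hsPX2, hsPY, mul_one, one_mul]
  have hm3 : ∀ t2 s t1, pr p (fun ω => (ω.1.2.2, (ω.1.1, ω.1.2.1))) (t2, (s, t1))
      = Pt (s, t1, t2) := by
    intro t2 s t1
    unfold pr
    simp only [Fintype.sum_prod_type, hp, Prod.mk.injEq, ite_and, Finset.sum_ite_irrel,
      Finset.sum_const_zero, Finset.sum_ite_eq, Finset.sum_ite_eq', Finset.mem_univ, if_true,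
      ← Finset.mul_sum, ← Finset.sum_mul, hsQA, hsQB, hsPU, hsPX1, hsPX2, hsPY, mul_one, one_mul]
  have hm4 : ∀ u a s t1, pr p (fun ω => ((ω.2.1, ω.2.2.1), (ω.1.1, ω.1.2.1))) ((u, a), (s, t1))
      = (∑ t2, Pt (s, t1, t2)) * QA s t1 a * PU u := by
    intro u a s t1
    unfold pr
    simp only [Fintype.sum_prod_type, hp, Prod.mk.injEq, ite_and, Finset.sum_ite_irrel,
      Finset.sum_const_zero, Finset.sum_ite_eq, Finset.sum_ite_eq', Finset.mem_univ, if_true,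
      ← Finset.mul_sum, ← Finset.sum_mul, hsQA, hsQB, hsPU, hsPX1, hsPX2, hsPY, mul_one, one_mul]
  have hm5 : ∀ s t2, pr p (fun ω => (ω.1.1, ω.1.2.2)) (s, t2) = ∑ t1, Pt (s, t1, t2) := by
    intro s t2
    unfold pr
    simp only [Fintype.sum_prod_type, hp, Prod.mk.injEq, ite_and, Finset.sum_ite_irrel,
      Finset.sum_const_zero, Finset.sum_ite_eq, Finset.sum_ite_eq', Finset.mem_univ, if_true,
      ← Finset.mul_sum, ← Finset.sum_mul, hsQA, hsQB, hsPU, hsPX1, hsPX2, hsPY, mul_one, one_mul]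
  have hm6 : ∀ b t1 u a s t2,
      pr p (fun ω => (ω.2.2.2.1, (ω.1.2.1, ω.2.1, ω.2.2.1), (ω.1.1, ω.1.2.2)))
        (b, (t1, u, a), (s, t2)) = Pt (s, t1, t2) * QA s t1 a * QB s t2 b * PU u := by
    intro b t1 u a s t2
    unfold pr
    simp only [Fintype.sum_prod_type, hp, Prod.mk.injEq, ite_and, Finset.sum_ite_irrel,
      Finset.sum_const_zero, Finset.sum_ite_eq, Finset.sum_ite_eq', Finset.mem_univ, if_true,
      ← Finset.mul_sum, ← Finset.sum_mul, hsQA, hsQB, hsPU, hsPX1, hsPX2, hsPY, mul_one, one_mul]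
  have hm7 : ∀ b s t2, pr p (fun ω => (ω.2.2.2.1, (ω.1.1, ω.1.2.2))) (b, (s, t2))
      = (∑ t1, Pt (s, t1, t2)) * QB s t2 b := by
    intro b s t2
    unfold pr
    simp only [Fintype.sum_prod_type, hp, Prod.mk.injEq, ite_and, Finset.sum_ite_irrel,
      Finset.sum_const_zero, Finset.sum_ite_eq, Finset.sum_ite_eq', Finset.mem_univ, if_true,
      ← Finset.mul_sum, ← Finset.sum_mul, hsQA, hsQB, hsPU, hsPX1, hsPX2, hsPY, mul_one, one_mul]
  have hm8 : ∀ t1 u a s t2, pr p (fun ω => ((ω.1.2.1, ω.2.1, ω.2.2.1), (ω.1.1, ω.1.2.2)))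
      ((t1, u, a), (s, t2)) = Pt (s, t1, t2) * QA s t1 a * PU u := by
    intro t1 u a s t2
    unfold pr
    simp only [Fintype.sum_prod_type, hp, Prod.mk.injEq, ite_and, Finset.sum_ite_irrel,
      Finset.sum_const_zero, Finset.sum_ite_eq, Finset.sum_ite_eq', Finset.mem_univ, if_true,
      ← Finset.mul_sum, ← Finset.sum_mul, hsQA, hsQB, hsPU, hsPX1, hsPX2, hsPY, mul_one, one_mul]
  have hm9 : ∀ s t1 u a b,
      pr p (fun ω => (ω.1.1, ω.1.2.1, ω.2.1, ω.2.2.1, ω.2.2.2.1)) (s, t1, u, a, b)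
        = (∑ t2, Pt (s, t1, t2) * QB s t2 b) * QA s t1 a * PU u := by
    intro s t1 u a b
    unfold pr
    simp only [Fintype.sum_prod_type, hp, Prod.mk.injEq, ite_and, Finset.sum_ite_irrel,
      Finset.sum_const_zero, Finset.sum_ite_eq, Finset.sum_ite_eq', Finset.mem_univ, if_true,
      ← Finset.mul_sum, ← Finset.sum_mul, hsQA, hsQB, hsPU, hsPX1, hsPX2, hsPY, mul_one, one_mul]
    simp only [Finset.sum_mul, Finset.mul_sum]
    try refine Finset.sum_congr rfl fun _ _ => ?_
    try refine Finset.sum_congr rfl fun _ _ => ?_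
    try refine Finset.sum_congr rfl fun _ _ => ?_
    ring
  have hm10 : ∀ t2 y s t1 u a b,
      pr p (fun ω => (ω.1.2.2, ω.2.2.2.2.2.2, (ω.1.1, ω.1.2.1, ω.2.1, ω.2.2.1, ω.2.2.2.1)))
        (t2, y, (s, t1, u, a, b))
        = Pt (s, t1, t2) * QA s t1 a * QB s t2 b * PU u
            * ∑ x1, ∑ x2, PX1 u a x1 * PX2 u b x2 * PY x1 x2 y := by
    intro t2 y s t1 u a b
    unfold pr
    simp only [Fintype.sum_prod_type, hp, Prod.mk.injEq, ite_and, Finset.sum_ite_irrel,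
      Finset.sum_const_zero, Finset.sum_ite_eq, Finset.sum_ite_eq', Finset.mem_univ, if_true,
      ← Finset.mul_sum, ← Finset.sum_mul, hsQA, hsQB, hsPU, hsPX1, hsPX2, hsPY, mul_one, one_mul]
    simp only [Finset.sum_mul, Finset.mul_sum]
    try refine Finset.sum_congr rfl fun _ _ => ?_
    try refine Finset.sum_congr rfl fun _ _ => ?_
    try refine Finset.sum_congr rfl fun _ _ => ?_
    ring
  have hm11 : ∀ t2 s t1 u a b,
      pr p (fun ω => (ω.1.2.2, (ω.1.1, ω.1.2.1, ω.2.1, ω.2.2.1, ω.2.2.2.1)))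
        (t2, (s, t1, u, a, b)) = Pt (s, t1, t2) * QA s t1 a * QB s t2 b * PU u := by
    intro t2 s t1 u a b
    unfold pr
    simp only [Fintype.sum_prod_type, hp, Prod.mk.injEq, ite_and, Finset.sum_ite_irrel,
      Finset.sum_const_zero, Finset.sum_ite_eq, Finset.sum_ite_eq', Finset.mem_univ, if_true,
      ← Finset.mul_sum, ← Finset.sum_mul, hsQA, hsQB, hsPU, hsPX1, hsPX2, hsPY, mul_one, one_mul]
  have hm12 : ∀ y s t1 u a b,
      pr p (fun ω => (ω.2.2.2.2.2.2, (ω.1.1, ω.1.2.1, ω.2.1, ω.2.2.1, ω.2.2.2.1)))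
        (y, (s, t1, u, a, b))
        = (∑ t2, Pt (s, t1, t2) * QB s t2 b) * QA s t1 a * PU u
            * ∑ x1, ∑ x2, PX1 u a x1 * PX2 u b x2 * PY x1 x2 y := by
    intro y s t1 u a b
    unfold pr
    simp only [Fintype.sum_prod_type, hp, Prod.mk.injEq, ite_and, Finset.sum_ite_irrel,
      Finset.sum_const_zero, Finset.sum_ite_eq, Finset.sum_ite_eq', Finset.mem_univ, if_true,
      ← Finset.mul_sum, ← Finset.sum_mul, hsQA, hsQB, hsPU, hsPX1, hsPX2, hsPY, mul_one, one_mul]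
    conv_rhs => rw [Finset.sum_mul, Finset.sum_mul, Finset.sum_mul]
    refine Finset.sum_congr rfl fun t2' _ => ?_
    rw [Finset.mul_sum]
    refine Finset.sum_congr rfl fun x1' _ => ?_
    rw [Finset.mul_sum]
    refine Finset.sum_congr rfl fun x2' _ => ?_
    ring
  have hm13 : ∀ u b, pr p (fun ω => (ω.2.1, ω.2.2.2.1)) (u, b)
      = (∑ st, ∑ t1, ∑ t2, Pt (st, t1, t2) * QB st t2 b) * PU u := by
    intro u b
    unfold pr
    simp only [Fintype.sum_prod_type, hp, Prod.mk.injEq, ite_and, Finset.sum_ite_irrel,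
      Finset.sum_const_zero, Finset.sum_ite_eq, Finset.sum_ite_eq', Finset.mem_univ, if_true,
      ← Finset.mul_sum, ← Finset.sum_mul, hsQA, hsQB, hsPU, hsPX1, hsPX2, hsPY, mul_one, one_mul]
  have hm14 : ∀ x2 a x1 u b,
      pr p (fun ω => (ω.2.2.2.2.2.1, (ω.2.2.1, ω.2.2.2.2.1), (ω.2.1, ω.2.2.2.1)))
        (x2, (a, x1), (u, b))
        = (∑ st, ∑ t1, ∑ t2, Pt (st, t1, t2) * QA st t1 a * QB st t2 b)
            * PU u * PX1 u a x1 * PX2 u b x2 := by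
    intro x2 a x1 u b
    unfold pr
    simp only [Fintype.sum_prod_type, hp, Prod.mk.injEq, ite_and, Finset.sum_ite_irrel,
      Finset.sum_const_zero, Finset.sum_ite_eq, Finset.sum_ite_eq', Finset.mem_univ, if_true,
      ← Finset.mul_sum, ← Finset.sum_mul, hsQA, hsQB, hsPU, hsPX1, hsPX2, hsPY, mul_one, one_mul]
  have hm15 : ∀ x2 u b, pr p (fun ω => (ω.2.2.2.2.2.1, (ω.2.1, ω.2.2.2.1))) (x2, (u, b))
      = (∑ st, ∑ t1, ∑ t2, Pt (st, t1, t2) * QB st t2 b) * PU u * PX2 u b x2 := by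
    intro x2 u b
    unfold pr
    simp only [Fintype.sum_prod_type, hp, Prod.mk.injEq, ite_and, Finset.sum_ite_irrel,
      Finset.sum_const_zero, Finset.sum_ite_eq, Finset.sum_ite_eq', Finset.mem_univ, if_true,
      ← Finset.mul_sum, ← Finset.sum_mul, hsQA, hsQB, hsPU, hsPX1, hsPX2, hsPY, mul_one, one_mul]
  have hm16 : ∀ a x1 u b, pr p (fun ω => ((ω.2.2.1, ω.2.2.2.2.1), (ω.2.1, ω.2.2.2.1)))
      ((a, x1), (u, b))
      = (∑ st, ∑ t1, ∑ t2, Pt (st, t1, t2) * QA st t1 a * QB st t2 b)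
          * PU u * PX1 u a x1 := by
    intro a x1 u b
    unfold pr
    simp only [Fintype.sum_prod_type, hp, Prod.mk.injEq, ite_and, Finset.sum_ite_irrel,
      Finset.sum_const_zero, Finset.sum_ite_eq, Finset.sum_ite_eq', Finset.mem_univ, if_true,
      ← Finset.mul_sum, ← Finset.sum_mul, hsQA, hsQB, hsPU, hsPX1, hsPX2, hsPY, mul_one, one_mul]
  -- the four conditional independences
  have ci1 : CondIndep p (fun ω => ω.2.2.2.2.2.1) (fun ω => (ω.2.2.1, ω.2.2.2.2.1))
      (fun ω => (ω.2.1, ω.2.2.2.1)) := by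
    rintro x2 ⟨a, x1⟩ ⟨u, b⟩
    simp only [hm13, hm14, hm15, hm16]
    ring
  have ci2 : CondIndep p (fun ω => ω.2.2.2.1) (fun ω => (ω.1.2.1, ω.2.1, ω.2.2.1))
      (fun ω => (ω.1.1, ω.1.2.2)) := by
    rintro b ⟨t1, u, a⟩ ⟨s, t2⟩
    simp only [hm5, hm6, hm7, hm8]
    ring
  have ci3 : CondIndep p (fun ω => ω.1.2.2) (fun ω => (ω.2.1, ω.2.2.1))
      (fun ω => (ω.1.1, ω.1.2.1)) := by
    rintro t2 ⟨u, a⟩ ⟨s, t1⟩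
    simp only [hm1, hm2, hm3, hm4]
    ring
  have ci4 : CondIndep p (fun ω => ω.1.2.2) (fun ω => ω.2.2.2.2.2.2)
      (fun ω => (ω.1.1, ω.1.2.1, ω.2.1, ω.2.2.1, ω.2.2.2.1)) := by
    rintro t2 y ⟨s, t1, u, a, b⟩
    simp only [hm9, hm10, hm11, hm12]
    ring
  -- entropy identities from the conditional independences (beta-reduced statements)
  have hE1 : ent p (fun ω => (ω.2.2.2.2.2.1, (ω.2.2.1, ω.2.2.2.2.1), (ω.2.1, ω.2.2.2.1)))
        + ent p (fun ω => (ω.2.1, ω.2.2.2.1))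
      = ent p (fun ω => (ω.2.2.2.2.2.1, (ω.2.1, ω.2.2.2.1)))
        + ent p (fun ω => ((ω.2.2.1, ω.2.2.2.2.1), (ω.2.1, ω.2.2.2.1))) := by
    have hh :=
      condIndep_ent p hp0 _ _ _ ci1
    simpa only [] using hh
  have hE2 : ent p (fun ω => (ω.2.2.2.1, (ω.1.2.1, ω.2.1, ω.2.2.1), (ω.1.1, ω.1.2.2)))
        + ent p (fun ω => (ω.1.1, ω.1.2.2))
      = ent p (fun ω => (ω.2.2.2.1, (ω.1.1, ω.1.2.2)))
        + ent p (fun ω => ((ω.1.2.1, ω.2.1, ω.2.2.1), (ω.1.1, ω.1.2.2))) := by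
    have hh :=
      condIndep_ent p hp0 _ _ _ ci2
    simpa only [] using hh
  have hE3 : ent p (fun ω => (ω.1.2.2, (ω.2.1, ω.2.2.1), (ω.1.1, ω.1.2.1)))
        + ent p (fun ω => (ω.1.1, ω.1.2.1))
      = ent p (fun ω => (ω.1.2.2, (ω.1.1, ω.1.2.1)))
        + ent p (fun ω => ((ω.2.1, ω.2.2.1), (ω.1.1, ω.1.2.1))) := by
    have hh :=
      condIndep_ent p hp0 _ _ _ ci3
    simpa only [] using hh
  have hE4 : ent p (fun ω => (ω.1.2.2, ω.2.2.2.2.2.2, (ω.1.1, ω.1.2.1, ω.2.1, ω.2.2.1, ω.2.2.2.1)))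
        + ent p (fun ω => (ω.1.1, ω.1.2.1, ω.2.1, ω.2.2.1, ω.2.2.2.1))
      = ent p (fun ω => (ω.1.2.2, (ω.1.1, ω.1.2.1, ω.2.1, ω.2.2.1, ω.2.2.2.1)))
        + ent p (fun ω => (ω.2.2.2.2.2.2, (ω.1.1, ω.1.2.1, ω.2.1, ω.2.2.1, ω.2.2.2.1))) := by
    have hh :=
      condIndep_ent p hp0 _ _ _ ci4
    -- distribution transfer from the marginal equality
    simpa only [] using hh
  have hdist : ∀ a, pr p (fun ω => ω.1) a
      = pr p (fun ω => ((ω.2.1, ω.2.2.1, ω.2.2.2.1, ω.2.2.2.2.2.2),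
          ω.2.2.2.2.1, ω.2.2.2.2.2.1)) a := fun a => hmarg a.1 a.2.1 a.2.2
  have hT1 : ent p (fun ω => (ω.1.2.2, (ω.1.1.1, ω.1.1.2.2.1)))
      = ent p (fun ω => (ω.2.2.2.2.2.1, (ω.2.1, ω.2.2.2.1))) := by
    have hh :=
      ent_comp_congr p _ _ hdist (fun c => (c.2.2, (c.1.1, c.1.2.2.1)))
    simpa only [] using hh
  have hT2 : ent p (fun ω => (ω.1.1.1, ω.1.1.2.2.1))
      = ent p (fun ω => (ω.2.1, ω.2.2.2.1)) := by
    have hh :=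
      ent_comp_congr p _ _ hdist (fun c => (c.1.1, c.1.2.2.1))
    simpa only [] using hh
  have hT3 : ent p (fun ω => (ω.1.2.2, (ω.1.1.1, ω.1.1.2.1, ω.1.1.2.2.1, ω.1.2.1)))
      = ent p (fun ω => (ω.2.2.2.2.2.1, (ω.2.1, ω.2.2.1, ω.2.2.2.1, ω.2.2.2.2.1))) := by
    have hh :=
      ent_comp_congr p _ _ hdist (fun c => (c.2.2, (c.1.1, c.1.2.1, c.1.2.2.1, c.2.1)))
    simpa only [] using hh
  have hT4 : ent p (fun ω => (ω.1.1.1, ω.1.1.2.1, ω.1.1.2.2.1, ω.1.2.1))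
      = ent p (fun ω => (ω.2.1, ω.2.2.1, ω.2.2.2.1, ω.2.2.2.2.1)) := by
    have hh :=
      ent_comp_congr p _ _ hdist (fun c => (c.1.1, c.1.2.1, c.1.2.2.1, c.2.1))
    -- tuple reorderings (injective recombinations)
    simpa only [] using hh
  have hG1 : ent p (fun ω => (ω.1.1.2.2.2, (ω.1.1.1, ω.1.1.2.1, ω.1.1.2.2.1, ω.1.2.1)))
      = ent p (fun ω => (ω.1.1, ω.1.2.1)) := by
    have hh :=
      ent_comp_inj p (fun ω => (ω.1.1, ω.1.2.1))
        (inj_of_linv (fun c => (c.1.2.2.2, (c.1.1, c.1.2.1, c.1.2.2.1, c.2)))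
          (fun d => ((d.2.1, d.2.2.1, d.2.2.2.1, d.1), d.2.2.2.2)) (fun a => rfl))
    simpa only [] using hh
  have hG2 : ent p (fun ω => (ω.1.2.2, ω.1.1.2.2.2, (ω.1.1.1, ω.1.1.2.1, ω.1.1.2.2.1, ω.1.2.1)))
      = ent p (fun ω => ω.1) := by
    have hh :=
      ent_comp_inj p (fun ω => ω.1)
        (inj_of_linv (fun c => (c.2.2, c.1.2.2.2, (c.1.1, c.1.2.1, c.1.2.2.1, c.2.1)))
          (fun d => ((d.2.2.1, d.2.2.2.1, d.2.2.2.2.1, d.2.1), d.2.2.2.2.2, d.1)) (fun a => rfl))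
    simpa only [] using hh
  have hG3 : ent p (fun ω => (ω.2.2.2.2.2.2, (ω.1.1, ω.1.2.1, ω.2.1, ω.2.2.1)))
      = ent p (fun ω => (ω.1.1, ω.1.2.1, ω.2.1, ω.2.2.1, ω.2.2.2.2.2.2)) := by
    have hh :=
      ent_comp_inj p (fun ω => (ω.1.1, ω.1.2.1, ω.2.1, ω.2.2.1, ω.2.2.2.2.2.2))
        (inj_of_linv (fun c => (c.2.2.2.2, (c.1, c.2.1, c.2.2.1, c.2.2.2.1)))
          (fun d => (d.2.1, d.2.2.1, d.2.2.2.1, d.2.2.2.2, d.1)) (fun a => rfl))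
    simpa only [] using hh
  have hG4 : ent p (fun ω => (ω.2.2.2.1, ω.2.2.2.2.2.2, (ω.1.1, ω.1.2.1, ω.2.1, ω.2.2.1)))
      = ent p (fun ω => (ω.1.1, ω.1.2.1, ω.2.1, ω.2.2.1, ω.2.2.2.1, ω.2.2.2.2.2.2)) := by
    have hh :=
      ent_comp_inj p (fun ω => (ω.1.1, ω.1.2.1, ω.2.1, ω.2.2.1, ω.2.2.2.1, ω.2.2.2.2.2.2))
        (inj_of_linv (fun c => (c.2.2.2.2.1, c.2.2.2.2.2, (c.1, c.2.1, c.2.2.1, c.2.2.2.1)))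
          (fun d => (d.2.2.1, d.2.2.2.1, d.2.2.2.2.1, d.2.2.2.2.2, d.1, d.2.1)) (fun a => rfl))
    simpa only [] using hh
  have hG5 : ent p (fun ω => ((ω.1.2.2, ω.2.2.2.1),
        (ω.1.1, ω.1.2.1, ω.2.1, ω.2.2.1, ω.2.2.2.2.2.2)))
      = ent p (fun ω => (ω.1.1, ω.1.2.1, ω.1.2.2, ω.2.1, ω.2.2.1, ω.2.2.2.1, ω.2.2.2.2.2.2)) := by
    have hh :=
      ent_comp_inj p (fun ω => (ω.1.1, ω.1.2.1, ω.1.2.2, ω.2.1, ω.2.2.1, ω.2.2.2.1, ω.2.2.2.2.2.2))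
        (inj_of_linv
          (fun c => ((c.2.2.1, c.2.2.2.2.2.1), (c.1, c.2.1, c.2.2.2.1, c.2.2.2.2.1, c.2.2.2.2.2.2)))
          (fun d => (d.2.1, d.2.2.1, d.1.1, d.2.2.2.1, d.2.2.2.2.1, d.1.2, d.2.2.2.2.2))
          (fun a => rfl))
    simpa only [] using hh
  have hG6 : ent p (fun ω => (ω.2.2.2.1, (ω.1.1, ω.1.2.1, ω.2.1, ω.2.2.1)))
      = ent p (fun ω => (ω.1.1, ω.1.2.1, ω.2.1, ω.2.2.1, ω.2.2.2.1)) := by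
    have hh :=
      ent_comp_inj p (fun ω => (ω.1.1, ω.1.2.1, ω.2.1, ω.2.2.1, ω.2.2.2.1))
        (inj_of_linv (fun c => (c.2.2.2.2, (c.1, c.2.1, c.2.2.1, c.2.2.2.1)))
          (fun d => (d.2.1, d.2.2.1, d.2.2.2.1, d.2.2.2.2, d.1)) (fun a => rfl))
    simpa only [] using hh
  have hR1 : ent p (fun ω => (ω.1.2.2, (ω.2.1, ω.2.2.1), (ω.1.1, ω.1.2.1)))
      = ent p (fun ω => (ω.1.1, ω.1.2.1, ω.1.2.2, ω.2.1, ω.2.2.1)) := by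
    have hh :=
      ent_comp_inj p (fun ω => (ω.1.1, ω.1.2.1, ω.1.2.2, ω.2.1, ω.2.2.1))
        (inj_of_linv (fun c => (c.2.2.1, (c.2.2.2.1, c.2.2.2.2), (c.1, c.2.1)))
          (fun d => (d.2.2.1, d.2.2.2, d.1, d.2.1.1, d.2.1.2)) (fun a => rfl))
    simpa only [] using hh
  have hR2 : ent p (fun ω => (ω.1.2.2, (ω.1.1, ω.1.2.1)))
      = ent p (fun ω => ω.1) := by
    have hh :=
      ent_comp_inj p (fun ω => ω.1)
        (inj_of_linv (fun c => (c.2.2, (c.1, c.2.1)))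
          (fun d => (d.2.1, d.2.2, d.1)) (fun a => rfl))
    simpa only [] using hh
  have hR3 : ent p (fun ω => ((ω.2.1, ω.2.2.1), (ω.1.1, ω.1.2.1)))
      = ent p (fun ω => (ω.1.1, ω.1.2.1, ω.2.1, ω.2.2.1)) := by
    have hh :=
      ent_comp_inj p (fun ω => (ω.1.1, ω.1.2.1, ω.2.1, ω.2.2.1))
        (inj_of_linv (fun c => ((c.2.2.1, c.2.2.2), (c.1, c.2.1)))
          (fun d => (d.2.1, d.2.2, d.1.1, d.1.2)) (fun a => rfl))
    simpa only [] using hh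
  have hR4 : ent p (fun ω => (ω.2.2.2.1, (ω.1.2.1, ω.2.1, ω.2.2.1), (ω.1.1, ω.1.2.2)))
      = ent p (fun ω => (ω.1.1, ω.1.2.1, ω.1.2.2, ω.2.1, ω.2.2.1, ω.2.2.2.1)) := by
    have hh :=
      ent_comp_inj p (fun ω => (ω.1.1, ω.1.2.1, ω.1.2.2, ω.2.1, ω.2.2.1, ω.2.2.2.1))
        (inj_of_linv
          (fun c => (c.2.2.2.2.2, (c.2.1, c.2.2.2.1, c.2.2.2.2.1), (c.1, c.2.2.1)))
          (fun d => (d.2.2.1, d.2.1.1, d.2.2.2, d.2.1.2.1, d.2.1.2.2, d.1)) (fun a => rfl))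
    simpa only [] using hh
  have hR5 : ent p (fun ω => ((ω.1.2.1, ω.2.1, ω.2.2.1), (ω.1.1, ω.1.2.2)))
      = ent p (fun ω => (ω.1.1, ω.1.2.1, ω.1.2.2, ω.2.1, ω.2.2.1)) := by
    have hh :=
      ent_comp_inj p (fun ω => (ω.1.1, ω.1.2.1, ω.1.2.2, ω.2.1, ω.2.2.1))
        (inj_of_linv (fun c => ((c.2.1, c.2.2.2.1, c.2.2.2.2), (c.1, c.2.2.1)))
          (fun d => (d.2.1, d.1.1, d.2.2, d.1.2.1, d.1.2.2)) (fun a => rfl))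
    simpa only [] using hh
  have hR6 : ent p (fun ω => (ω.1.2.2, ω.2.2.2.2.2.2, (ω.1.1, ω.1.2.1, ω.2.1, ω.2.2.1, ω.2.2.2.1)))
      = ent p (fun ω => (ω.1.1, ω.1.2.1, ω.1.2.2, ω.2.1, ω.2.2.1, ω.2.2.2.1, ω.2.2.2.2.2.2)) := by
    have hh :=
      ent_comp_inj p (fun ω => (ω.1.1, ω.1.2.1, ω.1.2.2, ω.2.1, ω.2.2.1, ω.2.2.2.1, ω.2.2.2.2.2.2))
        (inj_of_linv
          (fun c => (c.2.2.1, c.2.2.2.2.2.2, (c.1, c.2.1, c.2.2.2.1, c.2.2.2.2.1, c.2.2.2.2.2.1)))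
          (fun d => (d.2.2.1, d.2.2.2.1, d.1, d.2.2.2.2.1, d.2.2.2.2.2.1, d.2.2.2.2.2.2, d.2.1))
          (fun a => rfl))
    simpa only [] using hh
  have hR7 : ent p (fun ω => (ω.1.2.2, (ω.1.1, ω.1.2.1, ω.2.1, ω.2.2.1, ω.2.2.2.1)))
      = ent p (fun ω => (ω.1.1, ω.1.2.1, ω.1.2.2, ω.2.1, ω.2.2.1, ω.2.2.2.1)) := by
    have hh :=
      ent_comp_inj p (fun ω => (ω.1.1, ω.1.2.1, ω.1.2.2, ω.2.1, ω.2.2.1, ω.2.2.2.1))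
        (inj_of_linv (fun c => (c.2.2.1, (c.1, c.2.1, c.2.2.2.1, c.2.2.2.2.1, c.2.2.2.2.2)))
          (fun d => (d.2.1, d.2.2.1, d.1, d.2.2.2.1, d.2.2.2.2.1, d.2.2.2.2.2)) (fun a => rfl))
    simpa only [] using hh
  have hR8 : ent p (fun ω => (ω.2.2.2.2.2.2, (ω.1.1, ω.1.2.1, ω.2.1, ω.2.2.1, ω.2.2.2.1)))
      = ent p (fun ω => (ω.1.1, ω.1.2.1, ω.2.1, ω.2.2.1, ω.2.2.2.1, ω.2.2.2.2.2.2)) := by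
    have hh :=
      ent_comp_inj p (fun ω => (ω.1.1, ω.1.2.1, ω.2.1, ω.2.2.1, ω.2.2.2.1, ω.2.2.2.2.2.2))
        (inj_of_linv (fun c => (c.2.2.2.2.2, (c.1, c.2.1, c.2.2.1, c.2.2.2.1, c.2.2.2.2.1)))
          (fun d => (d.2.1, d.2.2.1, d.2.2.2.1, d.2.2.2.2.1, d.2.2.2.2.2, d.1)) (fun a => rfl))
    simpa only [] using hh
  have hR9 : ent p (fun ω => (ω.2.2.2.2.2.1, (ω.2.2.1, ω.2.2.2.2.1), (ω.2.1, ω.2.2.2.1)))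
      = ent p (fun ω => (ω.2.1, ω.2.2.1, ω.2.2.2.1, ω.2.2.2.2.1, ω.2.2.2.2.2.1)) := by
    have hh :=
      ent_comp_inj p (fun ω => (ω.2.1, ω.2.2.1, ω.2.2.2.1, ω.2.2.2.2.1, ω.2.2.2.2.2.1))
        (inj_of_linv (fun c => (c.2.2.2.2, (c.2.1, c.2.2.2.1), (c.1, c.2.2.1)))
          (fun d => (d.2.2.1, d.2.1.1, d.2.2.2, d.2.1.2, d.1)) (fun a => rfl))
    simpa only [] using hh
  have hR10 : ent p (fun ω => (ω.2.2.2.2.2.1, (ω.2.1, ω.2.2.1, ω.2.2.2.1, ω.2.2.2.2.1)))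
      = ent p (fun ω => (ω.2.1, ω.2.2.1, ω.2.2.2.1, ω.2.2.2.2.1, ω.2.2.2.2.2.1)) := by
    have hh :=
      ent_comp_inj p (fun ω => (ω.2.1, ω.2.2.1, ω.2.2.2.1, ω.2.2.2.2.1, ω.2.2.2.2.2.1))
        (inj_of_linv (fun c => (c.2.2.2.2, (c.1, c.2.1, c.2.2.1, c.2.2.2.1)))
          (fun d => (d.2.1, d.2.2.1, d.2.2.2.1, d.2.2.2.2, d.1)) (fun a => rfl))
    simpa only [] using hh
  have hR11 : ent p (fun ω => ((ω.2.2.1, ω.2.2.2.2.1), (ω.2.1, ω.2.2.2.1)))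
      = ent p (fun ω => (ω.2.1, ω.2.2.1, ω.2.2.2.1, ω.2.2.2.2.1)) := by
    have hh :=
      ent_comp_inj p (fun ω => (ω.2.1, ω.2.2.1, ω.2.2.2.1, ω.2.2.2.2.1))
        (inj_of_linv (fun c => ((c.2.1, c.2.2.2), (c.1, c.2.2.1)))
          (fun d => (d.2.1, d.1.1, d.2.2, d.1.2)) (fun a => rfl))
    simpa only [] using hh
  simp only [condEnt, condMI]
  linarith [hE1, hE2, hE3, hE4, hT1, hT2, hT3, hT4, hG1, hG2, hG3, hG4, hG5, hG6,
    hR1, hR2, hR3, hR4, hR5, hR6, hR7, hR8, hR9, hR10, hR11]
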